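/- arXiv:2204.11354 — 4 statements merged into one kernel-verified Lean document; each statement's English description precedes it below -/
import Mathlib

section
/- Let l ≥ 0 be a natural number. In the polynomial ring ℤ_p[X], the element X^(p^l) - 1 lies in the ideal generated by the elements p^i · (X-1)^(l+1-i) for 0 ≤ i ≤ l. -/
/-- For a prime `p` and `l ≥ 0`, in `ℤ_p[X]` the element
`X^(p^l) - 1` lies in the ideal generated by `p^i * (X - 1)^(l+1-i)` for `0 ≤ i ≤ l`. -/
theorem stmt_0 (p : ℕ) [Fact p.Prime] (l : ℕ) :
    (Polynomial.X ^ p ^ l - 1 : Polynomial ℤ_[p]) ∈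
      Ideal.span {f : Polynomial ℤ_[p] | ∃ i ≤ l,
        f = (p : Polynomial ℤ_[p]) ^ i * (Polynomial.X - 1) ^ (l + 1 - i)} := by
  have hp : p.Prime := Fact.out
  have hn0 : 0 < p ^ l := Nat.pow_pos hp.pos
  have hX : (Polynomial.X : Polynomial ℤ_[p]) = (Polynomial.X - 1) + 1 := by ring
  have expand : (Polynomial.X ^ p ^ l - 1 : Polynomial ℤ_[p])
      = ∑ i ∈ Finset.range (p ^ l),
          (Polynomial.X - 1) ^ (i + 1) * ((p ^ l).choose (i + 1) : Polynomial ℤ_[p]) := by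
    conv_lhs => rw [hX]
    rw [add_pow, Finset.sum_range_succ']
    simp only [pow_zero, one_pow, Nat.choose_zero_right, Nat.cast_one, mul_one, one_mul]
    rw [add_sub_cancel_right]
  rw [expand]
  apply Ideal.sum_mem
  intro i hi
  simp only [Finset.mem_range] at hi
  set k := i + 1 with hk
  have hk0 : k ≠ 0 := Nat.succ_ne_zero i
  have hkn : k ≤ p ^ l := hi
  set v := multiplicity p k with hv
  have hvk : p ^ v ∣ k := pow_multiplicity_dvd p k
  have hkpos : 0 < k := Nat.pos_of_ne_zero hk0
  have hpvk : p ^ v ≤ k := Nat.le_of_dvd hkpos hvk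
  have hvl : v ≤ l := by
    by_contra h
    push_neg at h
    have h1 : p ^ (l + 1) ≤ k := Nat.le_of_dvd hkpos (dvd_trans (pow_dvd_pow p h) hvk)
    have h2 : p ^ l < p ^ (l + 1) := Nat.pow_lt_pow_succ hp.one_lt
    omega
  have hkv : v + 1 ≤ k := by
    have h3 : v < p ^ v := Nat.lt_pow_self hp.one_lt
    omega
  have hdvd : p ^ (l - v) ∣ (p ^ l).choose k := by
    apply pow_dvd_of_le_emultiplicity
    exact le_of_eq (hp.emultiplicity_choose_prime_pow hkn hk0).symm
  obtain ⟨c, hc⟩ := hdvd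
  have hgen : ((p : Polynomial ℤ_[p]) ^ (l - v) * (Polynomial.X - 1) ^ (l + 1 - (l - v)))
      ∈ Ideal.span {f : Polynomial ℤ_[p] | ∃ i ≤ l,
        f = (p : Polynomial ℤ_[p]) ^ i * (Polynomial.X - 1) ^ (l + 1 - i)} :=
    Ideal.subset_span ⟨l - v, Nat.sub_le l v, rfl⟩
  have key : (Polynomial.X - 1 : Polynomial ℤ_[p]) ^ k
        * ((p ^ l).choose k : Polynomial ℤ_[p])
      = ((p : Polynomial ℤ_[p]) ^ (l - v) * (Polynomial.X - 1) ^ (l + 1 - (l - v)))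
        * ((c : Polynomial ℤ_[p]) * (Polynomial.X - 1) ^ (k - (v + 1))) := by
    have h1 : l + 1 - (l - v) = v + 1 := by omega
    have h2 : k = (v + 1) + (k - (v + 1)) := by omega
    rw [h1, hc]
    nth_rewrite 1 [h2]
    push_cast
    rw [pow_add]
    ring
  rw [key]
  exact Ideal.mul_mem_right _ _ hgen
end

section
/- An increasing union of a chain of subrings of a field, each of which is a principal ideal domain, is a Prüfer domain (i.e., every nonzero finitely generated ideal is invertible; equivalently every torsion-free module over it is flat). -/
/-- An increasing union of a chain of subrings of a field, each of which is
a principal ideal domain, is a Prüfer domain: every nonzero finitely generated ideal of the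
union is invertible as a fractional ideal. -/
theorem stmt_1 {K : Type*} [Field K] (R : ℕ → Subring K) (hmono : Monotone R)
    (hPID : ∀ n, IsPrincipalIdealRing (R n))
    (I : Ideal ↥(⨆ n, R n)) (hFG : I.FG) (hne : I ≠ ⊥) :
    ∃ J : FractionalIdeal (nonZeroDivisors ↥(⨆ n, R n)) (FractionRing ↥(⨆ n, R n)),
      (I : FractionalIdeal (nonZeroDivisors ↥(⨆ n, R n)) (FractionRing ↥(⨆ n, R n))) * J = 1 := by
  classical
  obtain ⟨s, hs⟩ := hFG
  have hdir : Directed (· ≤ ·) R := hmono.directed_le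
  choose f hf using fun x : ↥(⨆ n, R n) => (Subring.mem_iSup_of_directed hdir).mp x.2
  set N := s.sup f with hNdef
  have hmem : ∀ x : ↥(⨆ n, R n), x ∈ s → (x : K) ∈ R N :=
    fun x hx => hmono (Finset.le_sup hx) (hf x)
  set φ : R N →+* ↥(⨆ n, R n) := Subring.inclusion (le_iSup R N) with hφ
  set t : Finset (R N) := s.attach.image (fun x => (⟨x.1, hmem x.1 x.2⟩ : R N)) with ht
  have himg : φ '' (t : Set (R N)) = (s : Set ↥(⨆ n, R n)) := by
    ext x
    constructor
    · rintro ⟨y, hy, rfl⟩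
      simp only [ht, Finset.coe_image, Set.mem_image, Finset.mem_coe, Finset.mem_attach] at hy
      obtain ⟨z, -, rfl⟩ := hy
      have : φ ⟨z.1, hmem z.1 z.2⟩ = z.1 := Subtype.ext rfl
      rw [this]
      exact z.2
    · intro hx
      refine ⟨⟨x, hmem x hx⟩, ?_, Subtype.ext rfl⟩
      simp only [ht, Finset.coe_image, Set.mem_image, Finset.mem_coe]
      exact ⟨⟨x, hx⟩, Finset.mem_attach _ _, rfl⟩
  obtain ⟨g, hg⟩ := ((hPID N).principal (Ideal.span (t : Set (R N)))).principal
  have hI : I = Ideal.span {φ g} := by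
    have h1 : Ideal.map φ (Ideal.span (t : Set (R N))) = I := by
      rw [Ideal.map_span, himg, hs]
    rw [← h1, hg]
    rw [Ideal.submodule_span_eq, Ideal.map_span, Set.image_singleton]
  have hg0 : φ g ≠ 0 := by
    intro h
    apply hne
    rw [hI, h, Set.singleton_zero, Ideal.span_zero]
  set a := algebraMap ↥(⨆ n, R n) (FractionRing ↥(⨆ n, R n)) (φ g) with ha
  have ha0 : a ≠ 0 := fun h => hg0 <|
    IsFractionRing.injective ↥(⨆ n, R n) (FractionRing ↥(⨆ n, R n))
      (by rw [← ha, h, map_zero])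
  refine ⟨FractionalIdeal.spanSingleton _ a⁻¹, ?_⟩
  rw [hI, FractionalIdeal.coeIdeal_span_singleton, ← ha,
    FractionalIdeal.spanSingleton_mul_spanSingleton, mul_inv_cancel₀ ha0,
    FractionalIdeal.spanSingleton_one]
end

section
/- Let R be a principal ideal domain with a group Γ acting on Spec R (i.e. on R by ring automorphisms), let R₀ ⊆ R be a Γ-stable subring such that R is flat over R₀, and let N ⊆ M be an injection of R-modules with M finite free, arising as M = R ⊗_{R₀} M₀ → M for a torsion-free R₀-module M₀. Suppose: (1) the cokernel C of N → M is supported at finitely many maximal ideals of R; (2) the set of these maximal ideals is permuted by Γ; (3) the only maximal ideal of R with finite Γ-orbit is a fixed ideal m₀; (4) the m₀-adic completion of N → M is an isomorphism. Then C = 0 and N → M is an isomorphism. -/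
/-- geometric descent argument.  Let `R` be a PID with a group `Γ`
acting by ring automorphisms, `R₀ ⊆ R` a `Γ`-stable subring over which `R` is flat, `M₀`
a torsion-free `R₀`-module, and `f : R ⊗_{R₀} M₀ → M` an injective map of `R`-modules
with `M` finite free.  Suppose: (1) the cokernel of `f` is supported at a finite set
`supp` of maximal ideals; (2) `supp` is permuted by `Γ`; (3) the only maximal ideal with
finite `Γ`-orbit is `m₀`; (4) the `m₀`-adic completion of `f` is an isomorphism.  Then
the cokernel vanishes and `f` is an isomorphism. -/
theorem stmt_16 {R : Type*} [CommRing R] [IsDomain R] [IsPrincipalIdealRing R]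
    {Γ : Type*} [Group Γ] (ρ : Γ →* RingAut R)
    {R₀ : Type*} [CommRing R₀] [Algebra R₀ R] [Module.Flat R₀ R]
    (hstable : ∀ (g : Γ) (x : R₀), ∃ y : R₀, ρ g (algebraMap R₀ R x) = algebraMap R₀ R y)
    {M₀ : Type*} [AddCommGroup M₀] [Module R₀ M₀]
    (hM₀tf : ∀ (r : R₀) (m : M₀), r • m = 0 → r = 0 ∨ m = 0)
    {M : Type*} [AddCommGroup M] [Module R M] [Module.Finite R M] [Module.Free R M]
    (f : TensorProduct R₀ R M₀ →ₗ[R] M)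
    (hf : Function.Injective f)
    (m₀ : Ideal R) (hm₀ : m₀.IsMaximal)
    (supp : Set (Ideal R))
    (hsupp : supp = {m : Ideal R | m.IsMaximal ∧ ∃ x : M ⧸ LinearMap.range f,
      x ≠ 0 ∧ ∀ r : R, r • x = 0 → r ∈ m})
    (h1 : supp.Finite)
    (h2 : ∀ g : Γ, ∀ m ∈ supp, Ideal.map (ρ g : R ≃+* R).toRingHom m ∈ supp)
    (h3 : ∀ m : Ideal R, m.IsMaximal →
      (Set.range fun g : Γ => Ideal.map (ρ g : R ≃+* R).toRingHom m).Finite → m = m₀)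
    (h4 : Function.Bijective (AdicCompletion.map m₀ f)) :
    Function.Bijective f := by
  -- Let C be the cokernel of f.
  set C := M ⧸ LinearMap.range f with hC
  -- Step 1: completion of C at m₀ vanishes.
  have hmkQ : Function.Surjective (AdicCompletion.map m₀ (LinearMap.range f).mkQ) :=
    AdicCompletion.map_surjective m₀ (Submodule.mkQ_surjective _)
  have hcomp : (LinearMap.range f).mkQ.comp f = 0 := by
    ext x
    simp [Submodule.Quotient.mk_eq_zero]
  have hCzero : ∀ c : AdicCompletion m₀ C, c = 0 := by
    intro c
    obtain ⟨y, hy⟩ := hmkQ c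
    obtain ⟨x, hx⟩ := h4.2 y
    rw [← hy, ← hx, AdicCompletion.map_comp_apply, hcomp, AdicCompletion.map_zero]
    rfl
  -- Step 2: C = m₀ • C.
  have hle : (⊤ : Submodule R C) ≤ m₀ • ⊤ := by
    intro x _
    have h0 : AdicCompletion.of m₀ C x = 0 := hCzero _
    have h1' := congrArg (fun z => AdicCompletion.eval m₀ C 1 z) h0
    simp only [AdicCompletion.eval_of, map_zero] at h1'
    have : Submodule.mkQ (m₀ ^ 1 • ⊤ : Submodule R C) x = 0 := h1'
    rw [Submodule.mkQ_apply, Submodule.Quotient.mk_eq_zero, pow_one] at this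
    exact this
  -- Step 3: Nakayama yields r with r - 1 ∈ m₀ annihilating C.
  have hfg : (⊤ : Submodule R C).FG :=
    (Module.Finite.quotient R (LinearMap.range f)).fg_top
  obtain ⟨r, hr1, hr⟩ :=
    Submodule.exists_sub_one_mem_and_smul_eq_zero_of_fg_of_le_smul m₀ ⊤ hfg hle
  -- Step 4: every nonzero element of C would force a maximal ideal in supp ∋ r, = m₀.
  have hCtriv : ∀ x : C, x = 0 := by
    intro x
    by_contra hx
    have hann : (Module.annihilator R C ⊔ Ideal.span {r} : Ideal R) ≠ ⊤ ∨ True := Or.inr trivial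
    -- annihilator of x
    set A : Ideal R := Submodule.comap (LinearMap.toSpanSingleton R C x) ⊥ with hA
    have hAmem : ∀ s : R, s • x = 0 → s ∈ A := fun s hs => by
      simpa [hA, LinearMap.toSpanSingleton] using hs
    have hAne : A ≠ ⊤ := by
      intro h
      have : (1 : R) ∈ A := h ▸ Submodule.mem_top
      simp only [hA, Submodule.mem_comap, LinearMap.toSpanSingleton_apply,
        Submodule.mem_bot, one_smul] at this
      exact hx this
    obtain ⟨m, hmmax, hAm⟩ := Ideal.exists_le_maximal A hAne
    have hmsupp : m ∈ supp := by
      rw [hsupp]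
      exact ⟨hmmax, x, hx, fun s hs => hAm (hAmem s hs)⟩
    have horb : (Set.range fun g : Γ => Ideal.map (ρ g : R ≃+* R).toRingHom m).Finite := by
      apply h1.subset
      rintro _ ⟨g, rfl⟩
      exact h2 g m hmsupp
    have hmm₀ : m = m₀ := h3 m hmmax horb
    -- r ∈ m = m₀ contradiction
    have hrx : r • x = 0 := hr x Submodule.mem_top
    have hrm : r ∈ m₀ := hmm₀ ▸ hAm (hAmem r hrx)
    have : (1 : R) ∈ m₀ := by
      have := m₀.sub_mem hrm hr1
      simpa using this
    exact hm₀.ne_top (Ideal.eq_top_of_isUnit_mem _ this isUnit_one)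
  -- Step 5: conclude surjectivity.
  refine ⟨hf, fun y => ?_⟩
  have : Submodule.Quotient.mk (p := LinearMap.range f) y = 0 := hCtriv _
  rw [Submodule.Quotient.mk_eq_zero] at this
  exact this
end

section
/- Let A ⊆ B be an inclusion of rings such that B = ⋃_{n≥0} φ^{-n}(A) for a ring automorphism φ of B with φ(A) ⊆ A, where each φ^{-n}(A) is a Bézout domain. Then every finite free B-module M with a φ-semilinear bijection Φ: M → M satisfying Φ(bm) = φ(b)Φ(m) and admitting a basis with Mat(Φ) ∈ GL_d(B), is isomorphic to A ⊗_{A} M₀ for a finite free A-module M₀: namely, if e_1,...,e_d is a B-basis of M defined over φ^{-n}(A), then Φ^n(e_1),...,Φ^n(e_d) is a basis of M defined over A. -/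
/-- descent along Frobenius.  Let `B = ⋃_n φ^{-n}(A)` for a ring
automorphism `φ` of `B` with `φ(A) ⊆ A`, each `φ^{-n}(A)` a Bézout domain.  Let `M` be a
finite free `B`-module with a `φ`-semilinear bijection `Φ` whose matrix in a basis `e` lies
in `GL_d(B)` with entries in `φ^{-n}(A)`.  Then `Φ^n(e₁), …, Φ^n(e_d)` is a `B`-basis of
`M` which is defined over `A`: `Φ` sends each `Φ^n(e_j)` to an `A`-linear combination of
the `Φ^n(e_i)` (so `M` descends to a finite free module over `A`). -/
theorem stmt_19 {B : Type*} [CommRing B] [IsDomain B]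
    (A : Subring B) (φ : RingAut B)
    (hφA : ∀ a ∈ A, φ a ∈ A)
    (hunion : ∀ b : B, ∃ n : ℕ, (φ ^ n) b ∈ A)
    (hBezout : ∀ n : ℕ, IsBezout ↥(Subring.comap (φ ^ n : RingAut B).toRingHom A))
    {M : Type*} [AddCommGroup M] [Module B M]
    (Φ : M ≃+ M)
    (hΦ : ∀ (b : B) (m : M), Φ (b • m) = φ b • Φ m)
    {d : ℕ} (e : Module.Basis (Fin d) B M)
    (P : Matrix (Fin d) (Fin d) B)
    (hP : ∀ j, Φ (e j) = ∑ i, P i j • e i)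
    (hGL : IsUnit P)
    (n : ℕ) (hPA : ∀ i j, (φ ^ n) (P i j) ∈ A) :
    ∃ b : Module.Basis (Fin d) B M, (∀ j, b j = (⇑Φ)^[n] (e j)) ∧
      ∀ j, ∃ Q : Fin d → B, (∀ i, Q i ∈ A) ∧ Φ (b j) = ∑ i, Q i • b i := by
  -- iterate of Φ is semilinear over φ^k
  have hiter : ∀ (k : ℕ) (c : B) (m : M), (⇑Φ)^[k] (c • m) = (φ ^ k) c • (⇑Φ)^[k] m := by
    intro k
    induction k with
    | zero => intro c m; simp only [Function.iterate_zero, id, pow_zero]; rfl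
    | succ k ih =>
      intro c m
      rw [Function.iterate_succ_apply, hΦ, ih, pow_succ]
      rfl
  have hadd : ∀ (k : ℕ) (s : Finset (Fin d)) (f : Fin d → M),
      (⇑Φ)^[k] (∑ i ∈ s, f i) = ∑ i ∈ s, (⇑Φ)^[k] (f i) := by
    intro k
    induction k with
    | zero => intro s f; simp
    | succ k ih =>
      intro s f
      rw [Function.iterate_succ_apply, map_sum, ih]
      simp [Function.iterate_succ_apply]
  -- compute Φ^[k] (e j) in terms of e, with an invertible matrix of coefficients
  have key : ∀ k : ℕ, ∃ Q : Matrix (Fin d) (Fin d) B, IsUnit Q ∧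
      ∀ j, (⇑Φ)^[k] (e j) = ∑ i, Q i j • e i := by
    intro k
    induction k with
    | zero =>
      refine ⟨1, isUnit_one, fun j => ?_⟩
      simp [Matrix.one_apply, Finset.sum_ite_eq, eq_comm]
    | succ k ih =>
      obtain ⟨Q, hQu, hQ⟩ := ih
      refine ⟨Q * ((φ ^ k : RingAut B) : B →+* B).mapMatrix P, hQu.mul ?_, fun j => ?_⟩
      · exact hGL.map (RingHom.mapMatrix ((φ ^ k : RingAut B) : B →+* B))
      · rw [Function.iterate_succ_apply, hP j, hadd]
        have : ∀ i, (⇑Φ)^[k] (P i j • e i) = (φ ^ k) (P i j) • ∑ l, Q l i • e l := by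
          intro i; rw [hiter, hQ]
        simp_rw [this, Finset.smul_sum, smul_smul]
        rw [Finset.sum_comm]
        refine Finset.sum_congr rfl fun i _ => ?_
        rw [← Finset.sum_smul]
        congr 1
        rw [Matrix.mul_apply]
        exact Finset.sum_congr rfl fun x _ => by
          simp [RingHom.mapMatrix_apply, Matrix.map_apply, mul_comm]
  obtain ⟨Q, hQu, hQ⟩ := key n
  obtain ⟨u, hu⟩ := hQu
  have h1 : Q * (↑u⁻¹ : Matrix (Fin d) (Fin d) B) = 1 := by rw [← hu]; exact u.mul_inv
  have h2 : (↑u⁻¹ : Matrix (Fin d) (Fin d) B) * Q = 1 := by rw [← hu]; exact u.inv_mul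
  refine ⟨e.map (Matrix.toLinOfInv e e h1 h2), fun j => ?_, fun j => ?_⟩
  · simp [Matrix.toLinOfInv, hQ j]
  · refine ⟨fun i => (φ ^ n) (P i j), fun i => hPA i j, ?_⟩
    have hbj : ∀ j, (e.map (Matrix.toLinOfInv e e h1 h2)) j = (⇑Φ)^[n] (e j) := by
      intro j; simp [Matrix.toLinOfInv, hQ j]
    rw [hbj j, ← Function.iterate_succ_apply' (⇑Φ) n (e j), Function.iterate_succ_apply, hP j, hadd]
    refine Finset.sum_congr rfl fun i _ => ?_
    rw [hiter, hbj i]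
end
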